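/- arXiv:1202.3981 — 9 statements merged into one kernel-verified Lean document; each statement's English description precedes it below -/
import Mathlib

section
/- For every nonnegative integer n, the convolution sum of harmonic numbers satisfies ∑_{k=0}^{n} H_k · H_{n-k} = (n+1)·[(H_{n+1} − 1)² − H_{n+1}^{(2)} + 1]. -/
open Finset

/-- The harmonic number `H n = ∑_{k=1}^n 1/k`. -/
def H (n : ℕ) : ℚ := ∑ k ∈ Finset.range n, (1 : ℚ) / ((k : ℚ) + 1)

/-- The generalized harmonic number `H n ^ (m) = ∑_{k=1}^n 1/k^m`. -/
def Hgen (m n : ℕ) : ℚ := ∑ k ∈ Finset.range n, (1 : ℚ) / ((k : ℚ) + 1) ^ m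

lemma H_succ (n : ℕ) : H (n + 1) = H n + 1 / ((n : ℚ) + 1) := by
  simp [H, Finset.sum_range_succ]

lemma Hgen_succ (n : ℕ) : Hgen 2 (n + 1) = Hgen 2 n + 1 / ((n : ℚ) + 1) ^ 2 := by
  simp [Hgen, Finset.sum_range_succ]

lemma lemD (n : ℕ) :
    ∑ k ∈ Finset.range n, (1 : ℚ) / (((k : ℚ) + 1) * ((n : ℚ) - k)) =
      2 * H n / ((n : ℚ) + 1) := by
  have h1 : ∑ k ∈ Finset.range n, (1 : ℚ) / (((k : ℚ) + 1) * ((n : ℚ) - k)) =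
      ∑ k ∈ Finset.range n,
        (1 / ((n : ℚ) + 1)) * (1 / ((k : ℚ) + 1) + 1 / ((n : ℚ) - k)) := by
    refine Finset.sum_congr rfl fun k hk => ?_
    have hk' : (k : ℚ) < n := by exact_mod_cast Finset.mem_range.mp hk
    have h2 : (n : ℚ) - k ≠ 0 := by intro h; nlinarith
    have h3 : (k : ℚ) + 1 ≠ 0 := by positivity
    have h4 : (n : ℚ) + 1 ≠ 0 := by positivity
    field_simp
    ring
  rw [h1, ← Finset.mul_sum, Finset.sum_add_distrib]
  have h5 : ∑ k ∈ Finset.range n, (1 : ℚ) / ((n : ℚ) - k) =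
      ∑ k ∈ Finset.range n, (1 : ℚ) / ((k : ℚ) + 1) := by
    rw [← Finset.sum_range_reflect (fun k => (1 : ℚ) / ((k : ℚ) + 1)) n]
    refine Finset.sum_congr rfl fun k hk => ?_
    have hk' : k < n := Finset.mem_range.mp hk
    have : ((n - 1 - k : ℕ) : ℚ) = (n : ℚ) - 1 - k := by
      have : k ≤ n - 1 := Nat.le_sub_one_of_lt hk'
      push_cast [Nat.cast_sub this, Nat.cast_sub (Nat.one_le_of_lt hk')]
      ring
    rw [this]; ring_nf
  rw [h5, ← H]
  ring

lemma lemC (n : ℕ) :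
    ∑ k ∈ Finset.range (n + 1), H (n - k) / ((k : ℚ) + 1) =
      H (n + 1) ^ 2 - Hgen 2 (n + 1) := by
  induction n with
  | zero => simp [H, Hgen]
  | succ n ih =>
    rw [Finset.sum_range_succ]
    have h0 : H (n + 1 - (n + 1)) = 0 := by simp [H]
    rw [h0]
    have hsplit : ∑ k ∈ Finset.range (n + 1), H (n + 1 - k) / ((k : ℚ) + 1) =
        (∑ k ∈ Finset.range (n + 1), H (n - k) / ((k : ℚ) + 1)) +
        ∑ k ∈ Finset.range (n + 1),
          (1 : ℚ) / (((k : ℚ) + 1) * (((n + 1 : ℕ) : ℚ) - k)) := by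
      rw [← Finset.sum_add_distrib]
      refine Finset.sum_congr rfl fun k hk => ?_
      have hk' : k ≤ n := Nat.lt_succ_iff.mp (Finset.mem_range.mp hk)
      have h1 : n + 1 - k = (n - k) + 1 := by omega
      have h2 : ((n - k : ℕ) : ℚ) = (n : ℚ) - k := by
        push_cast [Nat.cast_sub hk']; ring
      rw [h1, H_succ, h2]
      have h3 : (k : ℚ) + 1 ≠ 0 := by positivity
      have h4 : (n : ℚ) - k + 1 ≠ 0 := by
        have : (k : ℚ) ≤ n := by exact_mod_cast hk'
        intro h; nlinarith
      push_cast
      have h5 : ((n : ℚ) + 1) - k = (n : ℚ) - k + 1 := by ring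
      rw [h5]
      field_simp [h3, h4]
    rw [hsplit, ih, lemD (n + 1)]
    rw [H_succ (n + 1), Hgen_succ (n + 1)]
    have h4 : ((n : ℚ) + 1) + 1 ≠ 0 := by positivity
    push_cast
    field_simp
    ring

theorem stmt0 (n : ℕ) :
    ∑ k ∈ Finset.range (n + 1), H k * H (n - k) =
      ((n : ℚ) + 1) * ((H (n + 1) - 1) ^ 2 - Hgen 2 (n + 1) + 1) := by
  induction n with
  | zero => simp [H, Hgen]
  | succ n ih =>
    rw [Finset.sum_range_succ]
    have h0 : H (n + 1 - (n + 1)) = 0 := by simp [H]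
    rw [h0, mul_zero, add_zero]
    have hsplit : ∑ k ∈ Finset.range (n + 1), H k * H (n + 1 - k) =
        (∑ k ∈ Finset.range (n + 1), H k * H (n - k)) +
        ∑ k ∈ Finset.range (n + 1), H k / ((n : ℚ) - k + 1) := by
      rw [← Finset.sum_add_distrib]
      refine Finset.sum_congr rfl fun k hk => ?_
      have hk' : k ≤ n := Nat.lt_succ_iff.mp (Finset.mem_range.mp hk)
      have h1 : n + 1 - k = (n - k) + 1 := by omega
      have h2 : ((n - k : ℕ) : ℚ) = (n : ℚ) - k := by
        push_cast [Nat.cast_sub hk']; ring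
      rw [h1, H_succ, h2]; ring
    have hrefl : ∑ k ∈ Finset.range (n + 1), H k / ((n : ℚ) - k + 1) =
        ∑ k ∈ Finset.range (n + 1), H (n - k) / ((k : ℚ) + 1) := by
      rw [← Finset.sum_range_reflect (fun k => H (n - k) / ((k : ℚ) + 1)) (n + 1)]
      refine Finset.sum_congr rfl fun k hk => ?_
      have hk' : k ≤ n := Nat.lt_succ_iff.mp (Finset.mem_range.mp hk)
      have e1 : n + 1 - 1 - k = n - k := by omega
      simp only [e1]
      have e2 : n - (n - k) = k := by omega
      rw [e2]
      have h2 : ((n - k : ℕ) : ℚ) = (n : ℚ) - k := by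
        push_cast [Nat.cast_sub hk']; ring
      rw [h2]
    rw [hsplit, hrefl, lemC n, ih, H_succ (n + 1), Hgen_succ (n + 1)]
    have h4 : (n : ℚ) + 1 + 1 ≠ 0 := by positivity
    push_cast
    field_simp
    ring
end

section
/- For every nonnegative integer n, ∑_{k=0}^{n} k²·H_k·H_{n-k} = (n(n+1)(2n+1)/6)·[H_{n+1}² − H_{n+1}^{(2)}] − (1/18)·n(n+1)(13n+5)·H_{n+1} + (1/108)·n(n+1)(71n+37). -/
open Finset

lemma denom_ne {n k : ℕ} (hk : k ≤ n) : (n : ℚ) + 1 - (k : ℚ) ≠ 0 := by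
  have : (k : ℚ) ≤ (n : ℚ) := by exact_mod_cast hk
  linarith

lemma reflectH (n : ℕ) :
    ∑ k ∈ Finset.range (n + 1), (1 : ℚ) / ((n : ℚ) + 1 - (k : ℚ)) = H (n + 1) := by
  rw [H, ← Finset.sum_range_reflect (fun j => (1 : ℚ) / ((j : ℚ) + 1)) (n + 1)]
  apply Finset.sum_congr rfl
  intro k hk
  simp only [Finset.mem_range, Nat.lt_succ_iff] at hk
  have h1 : n + 1 - 1 - k = n - k := by omega
  rw [h1]
  congr 1
  rw [Nat.cast_sub hk]
  ring

lemma A0 (n : ℕ) :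
    ∑ k ∈ Finset.range (n + 1), H k = ((n : ℚ) + 1) * H (n + 1) - ((n : ℚ) + 1) := by
  induction n with
  | zero => simp [H]
  | succ n ih =>
    rw [Finset.sum_range_succ, ih, H_succ (n + 1)]
    push_cast
    have h2 : (n : ℚ) + 1 + 1 ≠ 0 := by positivity
    field_simp
    ring

lemma A1 (n : ℕ) :
    ∑ k ∈ Finset.range (n + 1), (k : ℚ) * H k =
      (n : ℚ) * ((n : ℚ) + 1) / 2 * H (n + 1) - (n : ℚ) * ((n : ℚ) + 1) / 4 := by
  induction n with
  | zero => simp [H]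
  | succ n ih =>
    rw [Finset.sum_range_succ, ih, H_succ (n + 1)]
    push_cast
    have h2 : (n : ℚ) + 1 + 1 ≠ 0 := by positivity
    field_simp
    ring

lemma B0 (n : ℕ) :
    ∑ k ∈ Finset.range (n + 1), H k / ((n : ℚ) + 1 - (k : ℚ)) =
      (H (n + 1)) ^ 2 - Hgen 2 (n + 1) := by
  induction n with
  | zero => simp [H, Hgen]
  | succ n ih =>
    have key : ∑ k ∈ Finset.range (n + 2), H k / (((n : ℚ) + 1) + 1 - (k : ℚ)) =
        ∑ k ∈ Finset.range (n + 1), H k / ((n : ℚ) + 1 - (k : ℚ))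
          + ∑ k ∈ Finset.range (n + 1),
              (1 / ((n : ℚ) + 2)) * (1 / ((k : ℚ) + 1) + 1 / ((n : ℚ) + 1 - (k : ℚ))) := by
      rw [Finset.sum_range_succ' (fun k => H k / (((n : ℚ) + 1) + 1 - (k : ℚ))) (n + 1)]
      have h0 : H 0 = 0 := by simp [H]
      rw [h0, ← Finset.sum_add_distrib]
      simp only [zero_div, add_zero]
      apply Finset.sum_congr rfl
      intro k hk
      simp only [Finset.mem_range, Nat.lt_succ_iff] at hk
      rw [H_succ]
      have hd : (n : ℚ) + 1 - (k : ℚ) ≠ 0 := denom_ne hk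
      have hk1 : (k : ℚ) + 1 ≠ 0 := by positivity
      have hn2 : (n : ℚ) + 2 ≠ 0 := by positivity
      push_cast
      rw [show (n : ℚ) + 1 + 1 - ((k : ℚ) + 1) = (n : ℚ) + 1 - (k : ℚ) by ring]
      field_simp
      ring
    have hcast : ((n + 1 : ℕ) : ℚ) = (n : ℚ) + 1 := by push_cast; ring
    rw [show ((n : ℕ) + 1 + 1) = (n + 2) from rfl] at *
    rw [hcast, key, ih, ← Finset.mul_sum, Finset.sum_add_distrib, reflectH]
    have hH : ∑ k ∈ Finset.range (n + 1), (1 : ℚ) / ((k : ℚ) + 1) = H (n + 1) := rfl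
    rw [hH, H_succ (n + 1), Hgen_succ (n + 1)]
    push_cast
    have hn2 : (n : ℚ) + 2 ≠ 0 := by positivity
    field_simp
    ring

lemma B2 (n : ℕ) :
    ∑ k ∈ Finset.range (n + 1), (k : ℚ) ^ 2 * H k / ((n : ℚ) + 1 - (k : ℚ)) =
      ((n : ℚ) + 1) ^ 2 * ((H (n + 1)) ^ 2 - Hgen 2 (n + 1))
        - ((n : ℚ) + 1) * (((n : ℚ) + 1) * H (n + 1) - ((n : ℚ) + 1))
        - ((n : ℚ) * ((n : ℚ) + 1) / 2 * H (n + 1) - (n : ℚ) * ((n : ℚ) + 1) / 4) := by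
  have key : ∀ k ∈ Finset.range (n + 1),
      (k : ℚ) ^ 2 * H k / ((n : ℚ) + 1 - (k : ℚ)) =
        ((n : ℚ) + 1) ^ 2 * (H k / ((n : ℚ) + 1 - (k : ℚ)))
          - ((n : ℚ) + 1) * H k - (k : ℚ) * H k := by
    intro k hk
    simp only [Finset.mem_range, Nat.lt_succ_iff] at hk
    have hd : (n : ℚ) + 1 - (k : ℚ) ≠ 0 := denom_ne hk
    field_simp
    ring
  rw [Finset.sum_congr rfl key, Finset.sum_sub_distrib, Finset.sum_sub_distrib,
    ← Finset.mul_sum, ← Finset.mul_sum, B0, A0, A1]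

lemma Tstep (n : ℕ) :
    ∑ k ∈ Finset.range (n + 2), (k : ℚ) ^ 2 * H k * H (n + 1 - k) =
      ∑ k ∈ Finset.range (n + 1), (k : ℚ) ^ 2 * H k * H (n - k)
        + ∑ k ∈ Finset.range (n + 1), (k : ℚ) ^ 2 * H k / ((n : ℚ) + 1 - (k : ℚ)) := by
  rw [Finset.sum_range_succ]
  have h0 : H (n + 1 - (n + 1)) = 0 := by simp [H]
  rw [h0, mul_zero, add_zero, ← Finset.sum_add_distrib]
  apply Finset.sum_congr rfl
  intro k hk
  simp only [Finset.mem_range, Nat.lt_succ_iff] at hk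
  have h1 : n + 1 - k = (n - k) + 1 := by omega
  rw [h1, H_succ]
  have h2 : ((n - k : ℕ) : ℚ) + 1 = (n : ℚ) + 1 - (k : ℚ) := by
    rw [Nat.cast_sub hk]; ring
  rw [h2]
  ring

theorem stmt5 (n : ℕ) :
    ∑ k ∈ Finset.range (n + 1), (k : ℚ) ^ 2 * H k * H (n - k) =
      ((n : ℚ) * ((n : ℚ) + 1) * (2 * (n : ℚ) + 1) / 6) * ((H (n + 1)) ^ 2 - Hgen 2 (n + 1))
        - (1 / 18) * (n : ℚ) * ((n : ℚ) + 1) * (13 * (n : ℚ) + 5) * H (n + 1)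
        + (1 / 108) * (n : ℚ) * ((n : ℚ) + 1) * (71 * (n : ℚ) + 37) := by
  induction n with
  | zero => simp [H, Hgen]
  | succ n ih =>
    rw [show n + 1 + 1 = n + 2 from rfl, Tstep, ih, B2, H_succ (n + 1), Hgen_succ (n + 1)]
    push_cast
    have hn2 : (n : ℚ) + 2 ≠ 0 := by positivity
    field_simp
    ring
end

section
/- For every nonnegative integer n, ∑_{k=0}^{n} k⁵·H_k·H_{n-k} = (n²(n+1)²(2n²+2n−1)/12)·[H_{n+1}² − H_{n+1}^{(2)}] − (1/360)·n²(n+1)(157n³+218n²+17n−32)·H_{n+1} + (1/21600)·n²(n+1)(6839n³+14566n²+4129n−3934). -/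
open Finset

lemma Hzero : H 0 = 0 := by simp [H]

lemma Hsucc (n : ℕ) : H (n+1) = H n + 1/((n:ℚ)+1) := by
  simp [H, Finset.sum_range_succ]

lemma H2succ (n : ℕ) : Hgen 2 (n+1) = Hgen 2 n + 1/((n:ℚ)+1)^2 := by
  simp [Hgen, Finset.sum_range_succ]

lemma reflHH (i n : ℕ) :
    ∑ k ∈ Finset.range (n+1), ((n:ℚ)-(k:ℚ))^i * H (n-k) * H k
      = ∑ k ∈ Finset.range (n+1), (k:ℚ)^i * H k * H (n-k) := by
  rw [← Finset.sum_range_reflect (fun k => (k:ℚ)^i * H k * H (n-k)) (n+1)]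
  refine Finset.sum_congr rfl fun k hk => ?_
  have hk' : k ≤ n := Nat.lt_succ_iff.mp (Finset.mem_range.mp hk)
  rw [show n+1-1-k = n-k from by omega, show n-(n-k) = k from by omega, Nat.cast_sub hk']

lemma reflInv (n : ℕ) :
    ∑ k ∈ Finset.range (n+1), (1:ℚ)/((n:ℚ)-(k:ℚ)+1) = H (n+1) := by
  rw [← Finset.sum_range_reflect (fun k => (1:ℚ)/((n:ℚ)-(k:ℚ)+1)) (n+1)]
  rw [show H (n+1) = ∑ k ∈ Finset.range (n+1), (1:ℚ)/((k:ℚ)+1) from rfl]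
  refine Finset.sum_congr rfl fun k hk => ?_
  have hk' : k ≤ n := Nat.lt_succ_iff.mp (Finset.mem_range.mp hk)
  rw [show n+1-1-k = n-k from by omega, Nat.cast_sub hk']
  ring_nf

lemma Dsum (n : ℕ) :
    ∑ k ∈ Finset.range (n+1), (1:ℚ)/(((k:ℚ)+1)*((n:ℚ)-(k:ℚ)+1)) = 2*H (n+1)/((n:ℚ)+2) := by
  have h : ∀ k ∈ Finset.range (n+1), (1:ℚ)/(((k:ℚ)+1)*((n:ℚ)-(k:ℚ)+1))
      = 1/((n:ℚ)+2) * ((1:ℚ)/((k:ℚ)+1) + (1:ℚ)/((n:ℚ)-(k:ℚ)+1)) := by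
    intro k hk
    have hk' : (k:ℚ) ≤ (n:ℚ) := by
      exact_mod_cast Nat.lt_succ_iff.mp (Finset.mem_range.mp hk)
    have h1 : (k:ℚ)+1 ≠ 0 := by positivity
    have h2 : (n:ℚ)-(k:ℚ)+1 ≠ 0 := by intro hc; nlinarith
    have h3 : (n:ℚ)+2 ≠ 0 := by positivity
    field_simp
    ring
  rw [Finset.sum_congr rfl h, ← Finset.mul_sum, Finset.sum_add_distrib, reflInv]
  rw [show (∑ k ∈ Finset.range (n+1), (1:ℚ)/((k:ℚ)+1)) = H (n+1) from rfl]
  ring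

lemma Cform (n : ℕ) :
    ∑ k ∈ Finset.range (n+1), 1/((k:ℚ)+1) * H (n-k) = H (n+1)^2 - Hgen 2 (n+1) := by
  induction n with
  | zero => norm_num [H, Hgen, Finset.sum_range_succ]
  | succ n ih =>
    rw [Finset.sum_range_succ]
    have h : ∀ k ∈ Finset.range (n+1), 1/((k:ℚ)+1) * H (n+1-k)
        = 1/((k:ℚ)+1) * H (n-k) + (1:ℚ)/(((k:ℚ)+1)*((n:ℚ)-(k:ℚ)+1)) := by
      intro k hk
      have hk' : k ≤ n := Nat.lt_succ_iff.mp (Finset.mem_range.mp hk)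
      have hk'' : (k:ℚ) ≤ (n:ℚ) := by exact_mod_cast hk'
      rw [show n+1-k = (n-k)+1 from by omega, Hsucc, Nat.cast_sub hk']
      have h1 : (k:ℚ)+1 ≠ 0 := by positivity
      have h2 : (n:ℚ)-(k:ℚ)+1 ≠ 0 := by intro hc; nlinarith
      field_simp
    rw [Finset.sum_congr rfl h, Finset.sum_add_distrib, ih, Dsum]
    rw [show n+1-(n+1) = 0 from by omega, Hzero]
    rw [show (n:ℕ)+1+1 = (n+1)+1 from rfl, Hsucc (n+1), H2succ (n+1)]
    have h3 : (n:ℚ)+2 ≠ 0 := by positivity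
    push_cast
    field_simp
    ring

lemma Cform' (n : ℕ) :
    ∑ k ∈ Finset.range (n+1), 1/((n:ℚ)-(k:ℚ)+1) * H k = H (n+1)^2 - Hgen 2 (n+1) := by
  rw [← Finset.sum_range_reflect (fun k => 1/((n:ℚ)-(k:ℚ)+1) * H k) (n+1), ← Cform n]
  refine Finset.sum_congr rfl fun k hk => ?_
  have hk' : k ≤ n := Nat.lt_succ_iff.mp (Finset.mem_range.mp hk)
  rw [show n+1-1-k = n-k from by omega, Nat.cast_sub hk']
  ring_nf

lemma Skey (j n : ℕ) :
    ∑ k ∈ Finset.range (n+1+1), (k:ℚ)^j * H k * H (n+1-k)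
      = ∑ k ∈ Finset.range (n+1), ((n:ℚ)-(k:ℚ)+1)^j * (H (n-k) + 1/((n:ℚ)-(k:ℚ)+1)) * H k := by
  rw [← Finset.sum_range_reflect (fun k => (k:ℚ)^j * H k * H (n+1-k)) (n+1+1)]
  rw [Finset.sum_range_succ]
  rw [show n+1+1-1-(n+1) = 0 from by omega]
  norm_num [Hzero]
  refine Finset.sum_congr rfl fun k hk => ?_
  have hk' : k ≤ n := Nat.lt_succ_iff.mp (Finset.mem_range.mp hk)
  rw [show n+1-k = (n-k)+1 from by omega, show n+1-((n-k)+1) = k from by omega,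
    Hsucc (n-k)]
  push_cast [Nat.cast_sub hk']
  ring
lemma B0form (n : ℕ) :
    ∑ k ∈ Finset.range (n+1), ((n:ℚ)-(k:ℚ))^0 * H k = ((1 : ℚ) + (1 : ℚ) * (n:ℚ)^1) * H (n+1) + ((-1 : ℚ) + (-1 : ℚ) * (n:ℚ)^1) := by
  induction n with
  | zero => norm_num [H, Finset.sum_range_succ]
  | succ n ih =>
    rw [Finset.sum_range_succ]
    have h : ∀ k ∈ Finset.range (n+1), (((n+1:ℕ):ℚ)-(k:ℚ))^0 * H k = (((n:ℚ)-(k:ℚ))^0 * H k) := by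
      intro k _
      push_cast
      ring
    rw [Finset.sum_congr rfl h]
    try simp only [Finset.sum_add_distrib, ← Finset.mul_sum]
    rw [ih]
    rw [Hsucc (n+1)]
    have hne : (n:ℚ)+2 ≠ 0 := by positivity
    push_cast
    field_simp
    ring

lemma B1form (n : ℕ) :
    ∑ k ∈ Finset.range (n+1), ((n:ℚ)-(k:ℚ))^1 * H k = ((1/2 : ℚ) * (n:ℚ)^1 + (1/2 : ℚ) * (n:ℚ)^2) * H (n+1) + ((-3/4 : ℚ) * (n:ℚ)^1 + (-3/4 : ℚ) * (n:ℚ)^2) := by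
  induction n with
  | zero => norm_num [H, Finset.sum_range_succ]
  | succ n ih =>
    rw [Finset.sum_range_succ]
    have h : ∀ k ∈ Finset.range (n+1), (((n+1:ℕ):ℚ)-(k:ℚ))^1 * H k = (((n:ℚ)-(k:ℚ))^1 * H k) + (((n:ℚ)-(k:ℚ))^0 * H k) := by
      intro k _
      push_cast
      ring
    rw [Finset.sum_congr rfl h]
    try simp only [Finset.sum_add_distrib, ← Finset.mul_sum]
    rw [B0form n, ih]
    rw [Hsucc (n+1)]
    have hne : (n:ℚ)+2 ≠ 0 := by positivity
    push_cast
    field_simp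
    ring

lemma B2form (n : ℕ) :
    ∑ k ∈ Finset.range (n+1), ((n:ℚ)-(k:ℚ))^2 * H k = ((1/6 : ℚ) * (n:ℚ)^1 + (1/2 : ℚ) * (n:ℚ)^2 + (1/3 : ℚ) * (n:ℚ)^3) * H (n+1) + ((-5/36 : ℚ) * (n:ℚ)^1 + (-3/4 : ℚ) * (n:ℚ)^2 + (-11/18 : ℚ) * (n:ℚ)^3) := by
  induction n with
  | zero => norm_num [H, Finset.sum_range_succ]
  | succ n ih =>
    rw [Finset.sum_range_succ]
    have h : ∀ k ∈ Finset.range (n+1), (((n+1:ℕ):ℚ)-(k:ℚ))^2 * H k = (((n:ℚ)-(k:ℚ))^2 * H k) + (2 : ℚ) * (((n:ℚ)-(k:ℚ))^1 * H k) + (((n:ℚ)-(k:ℚ))^0 * H k) := by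
      intro k _
      push_cast
      ring
    rw [Finset.sum_congr rfl h]
    try simp only [Finset.sum_add_distrib, ← Finset.mul_sum]
    rw [B0form n, B1form n, ih]
    rw [Hsucc (n+1)]
    have hne : (n:ℚ)+2 ≠ 0 := by positivity
    push_cast
    field_simp
    ring

lemma B3form (n : ℕ) :
    ∑ k ∈ Finset.range (n+1), ((n:ℚ)-(k:ℚ))^3 * H k = ((1/4 : ℚ) * (n:ℚ)^2 + (1/2 : ℚ) * (n:ℚ)^3 + (1/4 : ℚ) * (n:ℚ)^4) * H (n+1) + ((1/24 : ℚ) * (n:ℚ)^1 + (-11/48 : ℚ) * (n:ℚ)^2 + (-19/24 : ℚ) * (n:ℚ)^3 + (-25/48 : ℚ) * (n:ℚ)^4) := by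
  induction n with
  | zero => norm_num [H, Finset.sum_range_succ]
  | succ n ih =>
    rw [Finset.sum_range_succ]
    have h : ∀ k ∈ Finset.range (n+1), (((n+1:ℕ):ℚ)-(k:ℚ))^3 * H k = (((n:ℚ)-(k:ℚ))^3 * H k) + (3 : ℚ) * (((n:ℚ)-(k:ℚ))^2 * H k) + (3 : ℚ) * (((n:ℚ)-(k:ℚ))^1 * H k) + (((n:ℚ)-(k:ℚ))^0 * H k) := by
      intro k _
      push_cast
      ring
    rw [Finset.sum_congr rfl h]
    try simp only [Finset.sum_add_distrib, ← Finset.mul_sum]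
    rw [B0form n, B1form n, B2form n, ih]
    rw [Hsucc (n+1)]
    have hne : (n:ℚ)+2 ≠ 0 := by positivity
    push_cast
    field_simp
    ring

lemma B4form (n : ℕ) :
    ∑ k ∈ Finset.range (n+1), ((n:ℚ)-(k:ℚ))^4 * H k = ((-1/30 : ℚ) * (n:ℚ)^1 + (1/3 : ℚ) * (n:ℚ)^3 + (1/2 : ℚ) * (n:ℚ)^4 + (1/5 : ℚ) * (n:ℚ)^5) * H (n+1) + ((4/225 : ℚ) * (n:ℚ)^1 + (11/120 : ℚ) * (n:ℚ)^2 + (-14/45 : ℚ) * (n:ℚ)^3 + (-101/120 : ℚ) * (n:ℚ)^4 + (-137/300 : ℚ) * (n:ℚ)^5) := by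
  induction n with
  | zero => norm_num [H, Finset.sum_range_succ]
  | succ n ih =>
    rw [Finset.sum_range_succ]
    have h : ∀ k ∈ Finset.range (n+1), (((n+1:ℕ):ℚ)-(k:ℚ))^4 * H k = (((n:ℚ)-(k:ℚ))^4 * H k) + (4 : ℚ) * (((n:ℚ)-(k:ℚ))^3 * H k) + (6 : ℚ) * (((n:ℚ)-(k:ℚ))^2 * H k) + (4 : ℚ) * (((n:ℚ)-(k:ℚ))^1 * H k) + (((n:ℚ)-(k:ℚ))^0 * H k) := by
      intro k _
      push_cast
      ring
    rw [Finset.sum_congr rfl h]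
    try simp only [Finset.sum_add_distrib, ← Finset.mul_sum]
    rw [B0form n, B1form n, B2form n, B3form n, ih]
    rw [Hsucc (n+1)]
    have hne : (n:ℚ)+2 ≠ 0 := by positivity
    push_cast
    field_simp
    ring

lemma S0form (n : ℕ) :
    ∑ k ∈ Finset.range (n+1), (k:ℚ)^0 * H k * H (n-k) = ((1 : ℚ) + (1 : ℚ) * (n:ℚ)^1) * (H (n+1)^2 - Hgen 2 (n+1)) + ((-2 : ℚ) + (-2 : ℚ) * (n:ℚ)^1) * H (n+1) + ((2 : ℚ) + (2 : ℚ) * (n:ℚ)^1) := by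
  induction n with
  | zero => norm_num [H, Hgen, Finset.sum_range_succ]
  | succ n ih =>
    rw [Skey 0 n]
    have h : ∀ k ∈ Finset.range (n+1), ((n:ℚ)-(k:ℚ)+1)^0 * (H (n-k) + 1/((n:ℚ)-(k:ℚ)+1)) * H k = (((n:ℚ)-(k:ℚ))^0 * H (n-k) * H k) + 1/((n:ℚ)-(k:ℚ)+1) * H k := by
      intro k _
      ring
    rw [Finset.sum_congr rfl h]
    try simp only [Finset.sum_add_distrib, ← Finset.mul_sum]
    rw [reflHH 0 n, ih, Cform' n]
    rw [Hsucc (n+1), H2succ (n+1)]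
    have hne : (n:ℚ)+2 ≠ 0 := by positivity
    push_cast
    field_simp
    ring

lemma S1form (n : ℕ) :
    ∑ k ∈ Finset.range (n+1), (k:ℚ)^1 * H k * H (n-k) = ((1/2 : ℚ) * (n:ℚ)^1 + (1/2 : ℚ) * (n:ℚ)^2) * (H (n+1)^2 - Hgen 2 (n+1)) + ((-1 : ℚ) * (n:ℚ)^1 + (-1 : ℚ) * (n:ℚ)^2) * H (n+1) + ((1 : ℚ) * (n:ℚ)^1 + (1 : ℚ) * (n:ℚ)^2) := by
  induction n with
  | zero => norm_num [H, Hgen, Finset.sum_range_succ]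
  | succ n ih =>
    rw [Skey 1 n]
    have h : ∀ k ∈ Finset.range (n+1), ((n:ℚ)-(k:ℚ)+1)^1 * (H (n-k) + 1/((n:ℚ)-(k:ℚ)+1)) * H k = (((n:ℚ)-(k:ℚ))^1 * H (n-k) * H k) + (((n:ℚ)-(k:ℚ))^0 * H (n-k) * H k) + (((n:ℚ)-(k:ℚ))^0 * H k) := by
      intro k hk
      have hk' : (k:ℚ) ≤ (n:ℚ) := by
        exact_mod_cast Nat.lt_succ_iff.mp (Finset.mem_range.mp hk)
      have h2 : (n:ℚ)-(k:ℚ)+1 ≠ 0 := by intro hc; nlinarith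
      field_simp
    rw [Finset.sum_congr rfl h]
    try simp only [Finset.sum_add_distrib, ← Finset.mul_sum]
    rw [reflHH 0 n, reflHH 1 n, S0form n, ih, B0form n]
    rw [Hsucc (n+1), H2succ (n+1)]
    have hne : (n:ℚ)+2 ≠ 0 := by positivity
    push_cast
    field_simp
    ring

lemma S2form (n : ℕ) :
    ∑ k ∈ Finset.range (n+1), (k:ℚ)^2 * H k * H (n-k) = ((1/6 : ℚ) * (n:ℚ)^1 + (1/2 : ℚ) * (n:ℚ)^2 + (1/3 : ℚ) * (n:ℚ)^3) * (H (n+1)^2 - Hgen 2 (n+1)) + ((-5/18 : ℚ) * (n:ℚ)^1 + (-1 : ℚ) * (n:ℚ)^2 + (-13/18 : ℚ) * (n:ℚ)^3) * H (n+1) + ((37/108 : ℚ) * (n:ℚ)^1 + (1 : ℚ) * (n:ℚ)^2 + (71/108 : ℚ) * (n:ℚ)^3) := by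
  induction n with
  | zero => norm_num [H, Hgen, Finset.sum_range_succ]
  | succ n ih =>
    rw [Skey 2 n]
    have h : ∀ k ∈ Finset.range (n+1), ((n:ℚ)-(k:ℚ)+1)^2 * (H (n-k) + 1/((n:ℚ)-(k:ℚ)+1)) * H k = (((n:ℚ)-(k:ℚ))^2 * H (n-k) * H k) + (2 : ℚ) * (((n:ℚ)-(k:ℚ))^1 * H (n-k) * H k) + (((n:ℚ)-(k:ℚ))^0 * H (n-k) * H k) + (((n:ℚ)-(k:ℚ))^1 * H k) + (((n:ℚ)-(k:ℚ))^0 * H k) := by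
      intro k hk
      have hk' : (k:ℚ) ≤ (n:ℚ) := by
        exact_mod_cast Nat.lt_succ_iff.mp (Finset.mem_range.mp hk)
      have h2 : (n:ℚ)-(k:ℚ)+1 ≠ 0 := by intro hc; nlinarith
      field_simp
      ring
    rw [Finset.sum_congr rfl h]
    try simp only [Finset.sum_add_distrib, ← Finset.mul_sum]
    rw [reflHH 0 n, reflHH 1 n, reflHH 2 n, S0form n, S1form n, ih, B0form n, B1form n]
    rw [Hsucc (n+1), H2succ (n+1)]
    have hne : (n:ℚ)+2 ≠ 0 := by positivity
    push_cast
    field_simp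
    ring

lemma S3form (n : ℕ) :
    ∑ k ∈ Finset.range (n+1), (k:ℚ)^3 * H k * H (n-k) = ((1/4 : ℚ) * (n:ℚ)^2 + (1/2 : ℚ) * (n:ℚ)^3 + (1/4 : ℚ) * (n:ℚ)^4) * (H (n+1)^2 - Hgen 2 (n+1)) + ((-5/12 : ℚ) * (n:ℚ)^2 + (-1 : ℚ) * (n:ℚ)^3 + (-7/12 : ℚ) * (n:ℚ)^4) * H (n+1) + ((37/72 : ℚ) * (n:ℚ)^2 + (1 : ℚ) * (n:ℚ)^3 + (35/72 : ℚ) * (n:ℚ)^4) := by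
  induction n with
  | zero => norm_num [H, Hgen, Finset.sum_range_succ]
  | succ n ih =>
    rw [Skey 3 n]
    have h : ∀ k ∈ Finset.range (n+1), ((n:ℚ)-(k:ℚ)+1)^3 * (H (n-k) + 1/((n:ℚ)-(k:ℚ)+1)) * H k = (((n:ℚ)-(k:ℚ))^3 * H (n-k) * H k) + (3 : ℚ) * (((n:ℚ)-(k:ℚ))^2 * H (n-k) * H k) + (3 : ℚ) * (((n:ℚ)-(k:ℚ))^1 * H (n-k) * H k) + (((n:ℚ)-(k:ℚ))^0 * H (n-k) * H k) + (((n:ℚ)-(k:ℚ))^2 * H k) + (2 : ℚ) * (((n:ℚ)-(k:ℚ))^1 * H k) + (((n:ℚ)-(k:ℚ))^0 * H k) := by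
      intro k hk
      have hk' : (k:ℚ) ≤ (n:ℚ) := by
        exact_mod_cast Nat.lt_succ_iff.mp (Finset.mem_range.mp hk)
      have h2 : (n:ℚ)-(k:ℚ)+1 ≠ 0 := by intro hc; nlinarith
      field_simp
      ring
    rw [Finset.sum_congr rfl h]
    try simp only [Finset.sum_add_distrib, ← Finset.mul_sum]
    rw [reflHH 0 n, reflHH 1 n, reflHH 2 n, reflHH 3 n, S0form n, S1form n, S2form n, ih, B0form n, B1form n, B2form n]
    rw [Hsucc (n+1), H2succ (n+1)]
    have hne : (n:ℚ)+2 ≠ 0 := by positivity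
    push_cast
    field_simp
    ring

set_option maxHeartbeats 4000000 in
lemma S4form (n : ℕ) :
    ∑ k ∈ Finset.range (n+1), (k:ℚ)^4 * H k * H (n-k) = ((-1/30 : ℚ) * (n:ℚ)^1 + (1/3 : ℚ) * (n:ℚ)^3 + (1/2 : ℚ) * (n:ℚ)^4 + (1/5 : ℚ) * (n:ℚ)^5) * (H (n+1)^2 - Hgen 2 (n+1)) + ((8/225 : ℚ) * (n:ℚ)^1 + (1/60 : ℚ) * (n:ℚ)^2 + (-97/180 : ℚ) * (n:ℚ)^3 + (-61/60 : ℚ) * (n:ℚ)^4 + (-149/300 : ℚ) * (n:ℚ)^5) * H (n+1) + ((-1967/27000 : ℚ) * (n:ℚ)^1 + (13/3600 : ℚ) * (n:ℚ)^2 + (7439/10800 : ℚ) * (n:ℚ)^3 + (3587/3600 : ℚ) * (n:ℚ)^4 + (6913/18000 : ℚ) * (n:ℚ)^5) := by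
  induction n with
  | zero => norm_num [H, Hgen, Finset.sum_range_succ]
  | succ n ih =>
    rw [Skey 4 n]
    have h : ∀ k ∈ Finset.range (n+1), ((n:ℚ)-(k:ℚ)+1)^4 * (H (n-k) + 1/((n:ℚ)-(k:ℚ)+1)) * H k = (((n:ℚ)-(k:ℚ))^4 * H (n-k) * H k) + (4 : ℚ) * (((n:ℚ)-(k:ℚ))^3 * H (n-k) * H k) + (6 : ℚ) * (((n:ℚ)-(k:ℚ))^2 * H (n-k) * H k) + (4 : ℚ) * (((n:ℚ)-(k:ℚ))^1 * H (n-k) * H k) + (((n:ℚ)-(k:ℚ))^0 * H (n-k) * H k) + (((n:ℚ)-(k:ℚ))^3 * H k) + (3 : ℚ) * (((n:ℚ)-(k:ℚ))^2 * H k) + (3 : ℚ) * (((n:ℚ)-(k:ℚ))^1 * H k) + (((n:ℚ)-(k:ℚ))^0 * H k) := by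
      intro k hk
      have hk' : (k:ℚ) ≤ (n:ℚ) := by
        exact_mod_cast Nat.lt_succ_iff.mp (Finset.mem_range.mp hk)
      have h2 : (n:ℚ)-(k:ℚ)+1 ≠ 0 := by intro hc; nlinarith
      field_simp
      ring
    rw [Finset.sum_congr rfl h]
    try simp only [Finset.sum_add_distrib, ← Finset.mul_sum]
    rw [reflHH 0 n, reflHH 1 n, reflHH 2 n, reflHH 3 n, reflHH 4 n, S0form n, S1form n, S2form n, S3form n, ih, B0form n, B1form n, B2form n, B3form n]
    rw [Hsucc (n+1), H2succ (n+1)]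
    have hne : (n:ℚ)+2 ≠ 0 := by positivity
    push_cast
    field_simp
    ring

set_option maxHeartbeats 4000000 in
lemma S5form (n : ℕ) :
    ∑ k ∈ Finset.range (n+1), (k:ℚ)^5 * H k * H (n-k) = ((-1/12 : ℚ) * (n:ℚ)^2 + (5/12 : ℚ) * (n:ℚ)^4 + (1/2 : ℚ) * (n:ℚ)^5 + (1/6 : ℚ) * (n:ℚ)^6) * (H (n+1)^2 - Hgen 2 (n+1)) + ((4/45 : ℚ) * (n:ℚ)^2 + (1/24 : ℚ) * (n:ℚ)^3 + (-47/72 : ℚ) * (n:ℚ)^4 + (-25/24 : ℚ) * (n:ℚ)^5 + (-157/360 : ℚ) * (n:ℚ)^6) * H (n+1) + ((-1967/10800 : ℚ) * (n:ℚ)^2 + (13/1440 : ℚ) * (n:ℚ)^3 + (3739/4320 : ℚ) * (n:ℚ)^4 + (1427/1440 : ℚ) * (n:ℚ)^5 + (6839/21600 : ℚ) * (n:ℚ)^6) := by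
  induction n with
  | zero => norm_num [H, Hgen, Finset.sum_range_succ]
  | succ n ih =>
    rw [Skey 5 n]
    have h : ∀ k ∈ Finset.range (n+1), ((n:ℚ)-(k:ℚ)+1)^5 * (H (n-k) + 1/((n:ℚ)-(k:ℚ)+1)) * H k = (((n:ℚ)-(k:ℚ))^5 * H (n-k) * H k) + (5 : ℚ) * (((n:ℚ)-(k:ℚ))^4 * H (n-k) * H k) + (10 : ℚ) * (((n:ℚ)-(k:ℚ))^3 * H (n-k) * H k) + (10 : ℚ) * (((n:ℚ)-(k:ℚ))^2 * H (n-k) * H k) + (5 : ℚ) * (((n:ℚ)-(k:ℚ))^1 * H (n-k) * H k) + (((n:ℚ)-(k:ℚ))^0 * H (n-k) * H k) + (((n:ℚ)-(k:ℚ))^4 * H k) + (4 : ℚ) * (((n:ℚ)-(k:ℚ))^3 * H k) + (6 : ℚ) * (((n:ℚ)-(k:ℚ))^2 * H k) + (4 : ℚ) * (((n:ℚ)-(k:ℚ))^1 * H k) + (((n:ℚ)-(k:ℚ))^0 * H k) := by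
      intro k hk
      have hk' : (k:ℚ) ≤ (n:ℚ) := by
        exact_mod_cast Nat.lt_succ_iff.mp (Finset.mem_range.mp hk)
      have h2 : (n:ℚ)-(k:ℚ)+1 ≠ 0 := by intro hc; nlinarith
      field_simp
      ring
    rw [Finset.sum_congr rfl h]
    try simp only [Finset.sum_add_distrib, ← Finset.mul_sum]
    rw [reflHH 0 n, reflHH 1 n, reflHH 2 n, reflHH 3 n, reflHH 4 n, reflHH 5 n, S0form n, S1form n, S2form n, S3form n, S4form n, ih, B0form n, B1form n, B2form n, B3form n, B4form n]
    rw [Hsucc (n+1), H2succ (n+1)]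
    have hne : (n:ℚ)+2 ≠ 0 := by positivity
    push_cast
    field_simp
    ring

theorem stmt8 (n : ℕ) :
    ∑ k ∈ Finset.range (n + 1), (k : ℚ) ^ 5 * H k * H (n - k) =
      ((n : ℚ) ^ 2 * ((n : ℚ) + 1) ^ 2 * (2 * (n : ℚ) ^ 2 + 2 * (n : ℚ) - 1) / 12) *
          ((H (n + 1)) ^ 2 - Hgen 2 (n + 1))
        - (1 / 360) * (n : ℚ) ^ 2 * ((n : ℚ) + 1) * (157 * (n : ℚ) ^ 3 + 218 * (n : ℚ) ^ 2 + 17 * (n : ℚ) - 32) * H (n + 1)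
        + (1 / 21600) * (n : ℚ) ^ 2 * ((n : ℚ) + 1) *
            (6839 * (n : ℚ) ^ 3 + 14566 * (n : ℚ) ^ 2 + 4129 * (n : ℚ) - 3934) := by
  rw [S5form n]
  ring
end

section
/- For every nonnegative integer n, ∑_{k=0}^{n} k²·H_k² = (n(n+1)(2n+1)/6)·H_{n+1}² − (1/18)(4n³+9n²+5n+3)·H_{n+1} + (1/108)(n+1)(8n²+n+18). -/
open Finset

theorem stmt10 (n : ℕ) :
    ∑ k ∈ Finset.range (n + 1), (k : ℚ) ^ 2 * (H k) ^ 2 =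
      ((n : ℚ) * ((n : ℚ) + 1) * (2 * (n : ℚ) + 1) / 6) * (H (n + 1)) ^ 2
        - (1 / 18) * (4 * (n : ℚ) ^ 3 + 9 * (n : ℚ) ^ 2 + 5 * (n : ℚ) + 3) * H (n + 1)
        + (1 / 108) * ((n : ℚ) + 1) * (8 * (n : ℚ) ^ 2 + (n : ℚ) + 18) := by
  induction n with
  | zero => norm_num [H]
  | succ n ih =>
    rw [Finset.sum_range_succ, ih, H_succ (n + 1)]
    have h : ((n : ℚ) + 1) + 1 ≠ 0 := by positivity
    push_cast
    field_simp
    ring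
end

section
/- For every nonnegative integer n, ∑_{k=0}^{n} k³·H_k² = (n²(n+1)²/4)·H_{n+1}² − (1/24)·n(n+1)(n+2)(3n+1)·H_{n+1} + (1/288)·n(n+1)(9n²+13n+14). -/
open Finset

theorem stmt11 (n : ℕ) :
    ∑ k ∈ Finset.range (n + 1), (k : ℚ) ^ 3 * (H k) ^ 2 =
      ((n : ℚ) ^ 2 * ((n : ℚ) + 1) ^ 2 / 4) * (H (n + 1)) ^ 2
        - (1 / 24) * (n : ℚ) * ((n : ℚ) + 1) * ((n : ℚ) + 2) * (3 * (n : ℚ) + 1) * H (n + 1)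
        + (1 / 288) * (n : ℚ) * ((n : ℚ) + 1) * (9 * (n : ℚ) ^ 2 + 13 * (n : ℚ) + 14) := by
  induction n with
  | zero => simp [H]
  | succ n ih =>
    rw [Finset.sum_range_succ, ih, H_succ (n + 1)]
    have h : ((n : ℚ) + 1 + 1) ≠ 0 := by positivity
    push_cast
    field_simp
    ring
end

section
/- For every nonnegative integer n, ∑_{k=0}^{n} k⁴·H_k² = (n(n+1)(2n+1)(3n²+3n−1)/30)·H_{n+1}² − (1/900)(72n⁵+315n⁴+410n³+135n²−32n−30)·H_{n+1} + (1/54000)(n+1)(864n⁴+2241n³+2629n²+1466n−1800). -/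
open Finset

theorem stmt12 (n : ℕ) :
    ∑ k ∈ Finset.range (n + 1), (k : ℚ) ^ 4 * (H k) ^ 2 =
      ((n : ℚ) * ((n : ℚ) + 1) * (2 * (n : ℚ) + 1) * (3 * (n : ℚ) ^ 2 + 3 * (n : ℚ) - 1) / 30) * (H (n + 1)) ^ 2
        - (1 / 900) * (72 * (n : ℚ) ^ 5 + 315 * (n : ℚ) ^ 4 + 410 * (n : ℚ) ^ 3 + 135 * (n : ℚ) ^ 2 - 32 * (n : ℚ) - 30) *
            H (n + 1)
        + (1 / 54000) * ((n : ℚ) + 1) *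
            (864 * (n : ℚ) ^ 4 + 2241 * (n : ℚ) ^ 3 + 2629 * (n : ℚ) ^ 2 + 1466 * (n : ℚ) - 1800) := by
  induction n with
  | zero => simp [H]; norm_num
  | succ n ih =>
    rw [Finset.sum_range_succ, ih]
    rw [show ((n : ℕ) + 1 + 1) = (n + 2) from rfl, H_succ (n + 1)]
    have h : ((n : ℚ) + 1 + 1) ≠ 0 := by positivity
    push_cast
    field_simp
    ring
end

section
/- For every nonnegative integer n, ∑_{k=0}^{n} k⁵·H_k² = (n²(n+1)²(2n²+2n−1)/12)·H_{n+1}² − (1/360)·n(n+1)(n+2)(2n+1)(10n²+19n−9)·H_{n+1} + (1/21600)·n(n+1)(200n⁴+736n³+1159n²+971n−366). -/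
open Finset

theorem stmt13 (n : ℕ) :
    ∑ k ∈ Finset.range (n + 1), (k : ℚ) ^ 5 * (H k) ^ 2 =
      ((n : ℚ) ^ 2 * ((n : ℚ) + 1) ^ 2 * (2 * (n : ℚ) ^ 2 + 2 * (n : ℚ) - 1) / 12) * (H (n + 1)) ^ 2
        - (1 / 360) * (n : ℚ) * ((n : ℚ) + 1) * ((n : ℚ) + 2) * (2 * (n : ℚ) + 1) * (10 * (n : ℚ) ^ 2 + 19 * (n : ℚ) - 9) *
            H (n + 1)
        + (1 / 21600) * (n : ℚ) * ((n : ℚ) + 1) *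
            (200 * (n : ℚ) ^ 4 + 736 * (n : ℚ) ^ 3 + 1159 * (n : ℚ) ^ 2 + 971 * (n : ℚ) - 366) := by
  induction n with
  | zero => simp [H]
  | succ m ih =>
      rw [Finset.sum_range_succ, ih]
      have hH : H (m + 2) = H (m + 1) + 1 / ((m : ℚ) + 2) := by
        simp [H, Finset.sum_range_succ]; push_cast; ring
      have h2 : ((m : ℚ) + 2) ≠ 0 := by positivity
      push_cast [hH]
      field_simp
      ring
end

section
/- For every nonnegative integer n, ∑_{k=0}^{n} k·H_{n-k}² = (n(n+1)/2)·H_{n+1}² − (1/2)(3n²+5n+1)·H_{n+1} + (1/4)(n+1)(7n+2). -/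
open Finset

lemma Tlem (n : ℕ) : ∑ j ∈ Finset.range (n + 1), (H j) ^ 2 =
    ((n : ℚ) + 1) * (H (n + 1)) ^ 2 - (2 * (n : ℚ) + 3) * H (n + 1) + 2 * ((n : ℚ) + 1) := by
  induction n with
  | zero => simp [H]; norm_num
  | succ n ih =>
    rw [Finset.sum_range_succ, ih, H_succ (n + 1)]
    have h1 : ((n : ℚ) + 1 + 1) ≠ 0 := by positivity
    push_cast
    field_simp
    ring

lemma Slem (n : ℕ) : ∑ j ∈ Finset.range (n + 1), ((n : ℚ) - j) * (H j) ^ 2 =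
      ((n : ℚ) * ((n : ℚ) + 1) / 2) * (H (n + 1)) ^ 2
        - (1 / 2) * (3 * (n : ℚ) ^ 2 + 5 * (n : ℚ) + 1) * H (n + 1)
        + (1 / 4) * ((n : ℚ) + 1) * (7 * (n : ℚ) + 2) := by
  induction n with
  | zero => simp [H, H_succ]; norm_num
  | succ n ih =>
    have split : ∑ j ∈ Finset.range (n + 2), (((n : ℚ) + 1) - j) * (H j) ^ 2
        = (∑ j ∈ Finset.range (n + 2), ((n : ℚ) - j) * (H j) ^ 2)
          + ∑ j ∈ Finset.range (n + 2), (H j) ^ 2 := by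
      rw [← Finset.sum_add_distrib]
      apply Finset.sum_congr rfl
      intro j _; ring
    push_cast
    rw [split, Finset.sum_range_succ _ (n + 1), ih, Tlem (n + 1), H_succ (n + 1)]
    have h1 : ((n : ℚ) + 1 + 1) ≠ 0 := by positivity
    push_cast
    field_simp
    ring

theorem stmt14 (n : ℕ) :
    ∑ k ∈ Finset.range (n + 1), (k : ℚ) * (H (n - k)) ^ 2 =
      ((n : ℚ) * ((n : ℚ) + 1) / 2) * (H (n + 1)) ^ 2
        - (1 / 2) * (3 * (n : ℚ) ^ 2 + 5 * (n : ℚ) + 1) * H (n + 1)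
        + (1 / 4) * ((n : ℚ) + 1) * (7 * (n : ℚ) + 2) := by
  rw [← Slem n, ← Finset.sum_range_reflect (fun k => (k : ℚ) * (H (n - k)) ^ 2) (n + 1)]
  apply Finset.sum_congr rfl
  intro j hj
  simp only [Finset.mem_range] at hj
  have hj' : j ≤ n := Nat.lt_succ_iff.mp hj
  rw [show n + 1 - 1 - j = n - j from by omega, Nat.sub_sub_self hj', Nat.cast_sub hj']
end

section
/- For every nonnegative integer n, ∑_{k=0}^{n} k⁵·H_{n-k}² = (n²(n+1)²(2n²+2n−1)/12)·H_{n+1}² − (1/120)·n(n+1)(98n⁴+236n³+159n²+n−14)·H_{n+1} + (1/21600)·n(n+1)(26978n⁴+49996n³+29599n²+1961n−3234). -/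
open Finset

lemma U0 (n : ℕ) : ∑ j ∈ Finset.range (n+1), (j:ℚ)^0 * H j ^ 2 =
    ((1 : ℚ) + (1 : ℚ) * (n:ℚ)) * H (n+1) ^ 2 + ((-3 : ℚ) + (-2 : ℚ) * (n:ℚ)) * H (n+1) + ((2 : ℚ) + (2 : ℚ) * (n:ℚ)) := by
  induction n with
  | zero => norm_num [H]
  | succ n ih =>
    have hH : H (n+1+1) = H (n+1) + 1/((n:ℚ)+2) := by
      rw [H, Finset.sum_range_succ, ← H]; push_cast; ring
    have h2 : ((n:ℚ)+2) ≠ 0 := by positivity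
    rw [Finset.sum_range_succ, ih, hH]
    push_cast
    field_simp
    ring

lemma U1 (n : ℕ) : ∑ j ∈ Finset.range (n+1), (j:ℚ)^1 * H j ^ 2 =
    ((1/2 : ℚ) * (n:ℚ) + (1/2 : ℚ) * (n:ℚ)^2) * H (n+1) ^ 2 + ((1/2 : ℚ) + (-1/2 : ℚ) * (n:ℚ) + (-1/2 : ℚ) * (n:ℚ)^2) * H (n+1) + ((-1/2 : ℚ) + (-1/4 : ℚ) * (n:ℚ) + (1/4 : ℚ) * (n:ℚ)^2) := by
  induction n with
  | zero => norm_num [H]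
  | succ n ih =>
    have hH : H (n+1+1) = H (n+1) + 1/((n:ℚ)+2) := by
      rw [H, Finset.sum_range_succ, ← H]; push_cast; ring
    have h2 : ((n:ℚ)+2) ≠ 0 := by positivity
    rw [Finset.sum_range_succ, ih, hH]
    push_cast
    field_simp
    ring

lemma U2 (n : ℕ) : ∑ j ∈ Finset.range (n+1), (j:ℚ)^2 * H j ^ 2 =
    ((1/6 : ℚ) * (n:ℚ) + (1/2 : ℚ) * (n:ℚ)^2 + (1/3 : ℚ) * (n:ℚ)^3) * H (n+1) ^ 2 + ((-1/6 : ℚ) + (-5/18 : ℚ) * (n:ℚ) + (-1/2 : ℚ) * (n:ℚ)^2 + (-2/9 : ℚ) * (n:ℚ)^3) * H (n+1) + ((1/6 : ℚ) + (19/108 : ℚ) * (n:ℚ) + (1/12 : ℚ) * (n:ℚ)^2 + (2/27 : ℚ) * (n:ℚ)^3) := by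
  induction n with
  | zero => norm_num [H]
  | succ n ih =>
    have hH : H (n+1+1) = H (n+1) + 1/((n:ℚ)+2) := by
      rw [H, Finset.sum_range_succ, ← H]; push_cast; ring
    have h2 : ((n:ℚ)+2) ≠ 0 := by positivity
    rw [Finset.sum_range_succ, ih, hH]
    push_cast
    field_simp
    ring

lemma U3 (n : ℕ) : ∑ j ∈ Finset.range (n+1), (j:ℚ)^3 * H j ^ 2 =
    ((1/4 : ℚ) * (n:ℚ)^2 + (1/2 : ℚ) * (n:ℚ)^3 + (1/4 : ℚ) * (n:ℚ)^4) * H (n+1) ^ 2 + ((-1/12 : ℚ) * (n:ℚ) + (-3/8 : ℚ) * (n:ℚ)^2 + (-5/12 : ℚ) * (n:ℚ)^3 + (-1/8 : ℚ) * (n:ℚ)^4) * H (n+1) + ((7/144 : ℚ) * (n:ℚ) + (3/32 : ℚ) * (n:ℚ)^2 + (11/144 : ℚ) * (n:ℚ)^3 + (1/32 : ℚ) * (n:ℚ)^4) := by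
  induction n with
  | zero => norm_num [H]
  | succ n ih =>
    have hH : H (n+1+1) = H (n+1) + 1/((n:ℚ)+2) := by
      rw [H, Finset.sum_range_succ, ← H]; push_cast; ring
    have h2 : ((n:ℚ)+2) ≠ 0 := by positivity
    rw [Finset.sum_range_succ, ih, hH]
    push_cast
    field_simp
    ring

lemma U4 (n : ℕ) : ∑ j ∈ Finset.range (n+1), (j:ℚ)^4 * H j ^ 2 =
    ((-1/30 : ℚ) * (n:ℚ) + (1/3 : ℚ) * (n:ℚ)^3 + (1/2 : ℚ) * (n:ℚ)^4 + (1/5 : ℚ) * (n:ℚ)^5) * H (n+1) ^ 2 + ((1/30 : ℚ) + (8/225 : ℚ) * (n:ℚ) + (-3/20 : ℚ) * (n:ℚ)^2 + (-41/90 : ℚ) * (n:ℚ)^3 + (-7/20 : ℚ) * (n:ℚ)^4 + (-2/25 : ℚ) * (n:ℚ)^5) * H (n+1) + ((-1/30 : ℚ) + (-167/27000 : ℚ) * (n:ℚ) + (91/1200 : ℚ) * (n:ℚ)^2 + (487/5400 : ℚ) * (n:ℚ)^3 + (23/400 : ℚ) * (n:ℚ)^4 + (2/125 : ℚ) * (n:ℚ)^5)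 := by
  induction n with
  | zero => norm_num [H]
  | succ n ih =>
    have hH : H (n+1+1) = H (n+1) + 1/((n:ℚ)+2) := by
      rw [H, Finset.sum_range_succ, ← H]; push_cast; ring
    have h2 : ((n:ℚ)+2) ≠ 0 := by positivity
    rw [Finset.sum_range_succ, ih, hH]
    push_cast
    field_simp
    ring

lemma U5 (n : ℕ) : ∑ j ∈ Finset.range (n+1), (j:ℚ)^5 * H j ^ 2 =
    ((-1/12 : ℚ) * (n:ℚ)^2 + (5/12 : ℚ) * (n:ℚ)^4 + (1/2 : ℚ) * (n:ℚ)^5 + (1/6 : ℚ) * (n:ℚ)^6) * H (n+1) ^ 2 + ((1/20 : ℚ) * (n:ℚ) + (5/72 : ℚ) * (n:ℚ)^2 + (-1/4 : ℚ) * (n:ℚ)^3 + (-37/72 : ℚ) * (n:ℚ)^4 + (-3/10 : ℚ) * (n:ℚ)^5 + (-1/18 : ℚ) * (n:ℚ)^6) * H (n+1) + ((-61/3600 : ℚ) * (n:ℚ) + (121/4320 : ℚ) * (n:ℚ)^2 + (71/720 : ℚ) * (n:ℚ)^3 + (379/4320 : ℚ) * (n:ℚ)^4 + (13/300 : ℚ)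 * (n:ℚ)^5 + (1/108 : ℚ) * (n:ℚ)^6) := by
  induction n with
  | zero => norm_num [H]
  | succ n ih =>
    have hH : H (n+1+1) = H (n+1) + 1/((n:ℚ)+2) := by
      rw [H, Finset.sum_range_succ, ← H]; push_cast; ring
    have h2 : ((n:ℚ)+2) ≠ 0 := by positivity
    rw [Finset.sum_range_succ, ih, hH]
    push_cast
    field_simp
    ring

theorem stmt18 (n : ℕ) :
    ∑ k ∈ Finset.range (n + 1), (k : ℚ) ^ 5 * (H (n - k)) ^ 2 =
      ((n : ℚ) ^ 2 * ((n : ℚ) + 1) ^ 2 * (2 * (n : ℚ) ^ 2 + 2 * (n : ℚ) - 1) / 12) * (H (n + 1)) ^ 2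
        - (1 / 120) * (n : ℚ) * ((n : ℚ) + 1) *
            (98 * (n : ℚ) ^ 4 + 236 * (n : ℚ) ^ 3 + 159 * (n : ℚ) ^ 2 + (n : ℚ) - 14) * H (n + 1)
        + (1 / 21600) * (n : ℚ) * ((n : ℚ) + 1) *
            (26978 * (n : ℚ) ^ 4 + 49996 * (n : ℚ) ^ 3 + 29599 * (n : ℚ) ^ 2 + 1961 * (n : ℚ) - 3234) := by
  have hrefl := Finset.sum_range_reflect (fun k => (k : ℚ) ^ 5 * (H (n - k)) ^ 2) (n+1)
  rw [← hrefl]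
  have step : ∀ j ∈ Finset.range (n+1),
      ((n + 1 - 1 - j : ℕ) : ℚ) ^ 5 * (H (n - (n + 1 - 1 - j))) ^ 2 =
      (n:ℚ)^5 * ((j:ℚ)^0 * H j ^ 2) - 5*(n:ℚ)^4 * ((j:ℚ)^1 * H j ^ 2)
        + 10*(n:ℚ)^3 * ((j:ℚ)^2 * H j ^ 2) - 10*(n:ℚ)^2 * ((j:ℚ)^3 * H j ^ 2)
        + 5*(n:ℚ) * ((j:ℚ)^4 * H j ^ 2) - ((j:ℚ)^5 * H j ^ 2) := by
    intro j hj
    have hjn : j ≤ n := Nat.lt_succ_iff.mp (Finset.mem_range.mp hj)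
    have h1 : n + 1 - 1 - j = n - j := by omega
    have h2 : n - (n - j) = j := Nat.sub_sub_self hjn
    rw [h1, h2, Nat.cast_sub hjn]
    ring
  rw [Finset.sum_congr rfl step]
  simp only [Finset.sum_add_distrib, Finset.sum_sub_distrib, ← Finset.mul_sum]
  rw [U0 n, U1 n, U2 n, U3 n, U4 n, U5 n]
  ring
end
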